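/- Let B be a finite Blaschke product of degree n with sup_{|z|=1}|B'(z)| = inf_{|z|=1}|B'(z)| = n (i.e., |B'| is identically n on the unit circle). Then B(z) = α z^n for some unimodular constant α. -/

import Mathlib

open Complex Finset Polynomial




lemma circle_sum (n : ℕ) (a : Fin n → ℂ)
    (ha : ∀ k, ‖a k‖ < 1) (α : ℂ) (hα : ‖α‖ = 1)
    (B : ℂ → ℂ)
    (hB : ∀ z, B z = α * ∏ k, (z - a k) / (1 - (starRingEnd ℂ) (a k) * z))
    (hconst : ∀ z : ℂ, ‖z‖ = 1 → ‖deriv B z‖ = n)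
    (z : ℂ) (hz : ‖z‖ = 1) :
    ∑ k, (1 - (starRingEnd ℂ) (a k) * a k) * z /
        ((z - a k) * (1 - (starRingEnd ℂ) (a k) * z)) = (n : ℂ) := by
  have hden : ∀ k, (1 : ℂ) - (starRingEnd ℂ) (a k) * z ≠ 0 := by
    intro k h
    have h1 : (starRingEnd ℂ) (a k) * z = 1 := by linear_combination -h
    have h2 : ‖(starRingEnd ℂ) (a k) * z‖ = ‖a k‖ := by
      simp [map_mul, hz]
    rw [h1] at h2
    simp at h2
    exact absurd h2.symm (ne_of_lt (ha k))
  have hsub : ∀ k, z - a k ≠ 0 := by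
    intro k h
    have : z = a k := by linear_combination h
    rw [this] at hz
    exact absurd hz (ne_of_lt (ha k))
  have hz0 : z ≠ 0 := by
    intro h; rw [h] at hz; simp at hz
  have hzconj : z * (starRingEnd ℂ) z = 1 := by
    rw [Complex.mul_conj]
    norm_cast
    rw [Complex.normSq_eq_norm_sq, hz]; norm_num
  -- the derivative of B
  have hderiv : deriv B z = α * ∑ k, (∏ j ∈ Finset.univ.erase k,
        (z - a j) / (1 - (starRingEnd ℂ) (a j) * z)) •
      ((1 * (1 - (starRingEnd ℂ) (a k) * z) - (z - a k) * (-(starRingEnd ℂ) (a k))) /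
        (1 - (starRingEnd ℂ) (a k) * z) ^ 2) := by
    have hf : ∀ k : Fin n, HasDerivAt (fun w => (w - a k) / (1 - (starRingEnd ℂ) (a k) * w))
        ((1 * (1 - (starRingEnd ℂ) (a k) * z) - (z - a k) * (-(starRingEnd ℂ) (a k))) /
          (1 - (starRingEnd ℂ) (a k) * z) ^ 2) z := by
      intro k
      have hu : HasDerivAt (fun w : ℂ => w - a k) 1 z := (hasDerivAt_id z).sub_const _
      have hv : HasDerivAt (fun w : ℂ => 1 - (starRingEnd ℂ) (a k) * w)
          (-(starRingEnd ℂ) (a k)) z := by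
        simpa using ((hasDerivAt_id z).const_mul ((starRingEnd ℂ) (a k))).const_sub 1
      exact hu.div hv (hden k)
    have hprod := HasDerivAt.finset_prod (u := Finset.univ) (f' := fun k =>
        ((1 * (1 - (starRingEnd ℂ) (a k) * z) - (z - a k) * (-(starRingEnd ℂ) (a k))) /
          (1 - (starRingEnd ℂ) (a k) * z) ^ 2)) (fun i _ => hf i)
    have hBfun : B = fun w => α * ∏ k, (w - a k) / (1 - (starRingEnd ℂ) (a k) * w) :=
      funext hB
    rw [hBfun]
    simpa only [Finset.prod_apply] using (hprod.const_mul α).deriv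
  -- z * B'(z) = B(z) * ∑ T
  have hmain : z * deriv B z = B z * ∑ k, (1 - (starRingEnd ℂ) (a k) * a k) * z /
      ((z - a k) * (1 - (starRingEnd ℂ) (a k) * z)) := by
    have hterm : ∀ k : Fin n, z *
        ((1 * (1 - (starRingEnd ℂ) (a k) * z) - (z - a k) * (-(starRingEnd ℂ) (a k))) /
          (1 - (starRingEnd ℂ) (a k) * z) ^ 2) =
        ((z - a k) / (1 - (starRingEnd ℂ) (a k) * z)) *
        ((1 - (starRingEnd ℂ) (a k) * a k) * z /
          ((z - a k) * (1 - (starRingEnd ℂ) (a k) * z))) := by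
      intro k
      have h1 := hden k
      have h2 := hsub k
      field_simp
      ring
    rw [hderiv, hB z, Finset.mul_sum, mul_sum, mul_sum]
    apply Finset.sum_congr rfl
    intro k _
    rw [← Finset.mul_prod_erase Finset.univ _ (Finset.mem_univ k)]
    simp only [smul_eq_mul]
    linear_combination
      (α * ∏ j ∈ Finset.univ.erase k, (z - a j) / (1 - (starRingEnd ℂ) (a j) * z)) * hterm k
  -- |B z| = 1
  have hBabs : ‖B z‖ = 1 := by
    rw [hB z, norm_mul, hα, one_mul, norm_prod]
    apply Finset.prod_eq_one
    intro k _
    rw [norm_div]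
    have h1 : (1 : ℂ) - (starRingEnd ℂ) (a k) * z = z * (starRingEnd ℂ) (z - a k) := by
      rw [map_sub, mul_sub, hzconj]; ring
    rw [h1, norm_mul, hz, one_mul, Complex.norm_conj]
    exact div_self (norm_ne_zero_iff.mpr (hsub k))
  -- T is real
  have hreal : ∀ k, (1 - (starRingEnd ℂ) (a k) * a k) * z /
      ((z - a k) * (1 - (starRingEnd ℂ) (a k) * z)) =
      (((1 - Complex.normSq (a k)) / Complex.normSq (z - a k) : ℝ) : ℂ) := by
    intro k
    have h1 : (1 : ℂ) - (starRingEnd ℂ) (a k) * z = z * (starRingEnd ℂ) (z - a k) := by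
      rw [map_sub, mul_sub, hzconj]; ring
    have h2 : (z - a k) * ((starRingEnd ℂ) (z - a k)) = (Complex.normSq (z - a k) : ℂ) :=
      Complex.mul_conj _
    have h3 : (1 : ℂ) - (starRingEnd ℂ) (a k) * a k = ((1 - Complex.normSq (a k) : ℝ) : ℂ) := by
      push_cast
      rw [← Complex.normSq_eq_conj_mul_self]
    rw [h1, h3]
    rw [show (z - a k) * (z * (starRingEnd ℂ) (z - a k)) =
      z * ((z - a k) * (starRingEnd ℂ) (z - a k)) by ring, h2]
    rw [mul_comm _ z, mul_div_mul_left _ _ hz0]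
    push_cast
    ring
  have hns : ∀ k, Complex.normSq (z - a k) ≠ 0 := fun k => by
    simpa [Complex.normSq_eq_zero] using hsub k
  -- conclude
  have habs : ‖∑ k, (1 - (starRingEnd ℂ) (a k) * a k) * z /
      ((z - a k) * (1 - (starRingEnd ℂ) (a k) * z))‖ = n := by
    have := hconst z hz
    calc ‖∑ k, (1 - (starRingEnd ℂ) (a k) * a k) * z /
          ((z - a k) * (1 - (starRingEnd ℂ) (a k) * z))‖
        = ‖B z‖ * ‖∑ k, (1 - (starRingEnd ℂ) (a k) * a k) * z /
          ((z - a k) * (1 - (starRingEnd ℂ) (a k) * z))‖ := by rw [hBabs, one_mul]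
      _ = ‖z * deriv B z‖ := by rw [hmain, norm_mul]
      _ = n := by rw [norm_mul, hz, one_mul, this]
  have hsumr : ∑ k, (1 - (starRingEnd ℂ) (a k) * a k) * z /
      ((z - a k) * (1 - (starRingEnd ℂ) (a k) * z)) =
      ((∑ k, (1 - Complex.normSq (a k)) / Complex.normSq (z - a k) : ℝ) : ℂ) := by
    rw [Complex.ofReal_sum]
    exact Finset.sum_congr rfl fun k _ => hreal k
  rw [hsumr] at habs ⊢
  rw [Complex.norm_real, Real.norm_eq_abs] at habs
  have hnonneg : (0 : ℝ) ≤ ∑ k, (1 - Complex.normSq (a k)) / Complex.normSq (z - a k) := by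
    apply Finset.sum_nonneg
    intro k _
    apply div_nonneg
    · have : Complex.normSq (a k) < 1 := by
        rw [← Complex.sq_norm]
        nlinarith [ha k, norm_nonneg (a k)]
      linarith
    · exact Complex.normSq_nonneg _
  rw [_root_.abs_of_nonneg hnonneg] at habs
  exact_mod_cast habs




lemma circle_infinite : {z : ℂ | ‖z‖ = 1}.Infinite := by
  have : Infinite ↥(Set.Ioo (0:ℝ) 1) := Set.Ioo.infinite (by norm_num)
  apply Set.infinite_of_injective_forall_mem
    (f := fun t : ↥(Set.Ioo (0:ℝ) 1) => Complex.exp ((t : ℝ) * Complex.I))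
  · rintro ⟨t, ht⟩ ⟨s, hs⟩ h
    simp only at h
    rw [Complex.exp_eq_exp_iff_exists_int] at h
    obtain ⟨m, hm⟩ := h
    have hm' : (t : ℂ) = s + m * (2 * Real.pi) := by
      have hI : ((t : ℂ) - (s + m * (2 * Real.pi))) * Complex.I = 0 := by
        linear_combination hm
      have := mul_eq_zero.mp hI
      rcases this with h | h
      · linear_combination h
      · exact absurd h Complex.I_ne_zero
    have hr : (t : ℝ) = s + m * (2 * Real.pi) := by exact_mod_cast hm'
    have hpi := Real.pi_gt_three
    have hb : |(t : ℝ) - s| < 1 := by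
      rw [abs_sub_lt_iff]
      constructor <;> [linarith [ht.1, ht.2, hs.1, hs.2]; linarith [ht.1, ht.2, hs.1, hs.2]]
    have hm0 : m = 0 := by
      by_contra hm0
      have h1 : (1 : ℝ) ≤ |(m : ℝ)| := by
        rw [← Int.cast_abs]
        exact_mod_cast Int.one_le_abs hm0
      have h2 : |(t : ℝ) - s| = |(m : ℝ)| * (2 * Real.pi) := by
        rw [hr]; rw [show s + (m : ℝ) * (2 * Real.pi) - s = (m:ℝ) * (2 * Real.pi) by ring]
        rw [abs_mul, _root_.abs_of_pos (show (0:ℝ) < 2 * Real.pi by linarith)]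
      nlinarith
    apply Subtype.ext
    simpa [hm0] using hr
  · intro t
    simp only [Set.mem_setOf_eq, Complex.norm_exp]
    rw [show ((t : ℝ) * Complex.I).re = 0 by simp]
    exact Real.exp_zero






lemma all_zero (n : ℕ) (a : Fin n → ℂ) (ha : ∀ k, ‖a k‖ < 1)
    (hkey : ∀ z : ℂ, ‖z‖ = 1 →
      ∑ k, (1 - (starRingEnd ℂ) (a k) * a k) * z /
        ((z - a k) * (1 - (starRingEnd ℂ) (a k) * z)) = (n : ℂ)) :
    ∀ k, a k = 0 := by
  classical
  set Q : Fin n → ℂ[X] := fun j =>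
    (X - C (a j)) * (1 - C ((starRingEnd ℂ) (a j)) * X) with hQdef
  have hQ0 : ∀ j, Q j ≠ 0 := by
    intro j
    apply mul_ne_zero (X_sub_C_ne_zero _)
    intro h
    have := congrArg (eval 0) h
    simp at this
  have hQeval : ∀ j (z : ℂ), eval z (Q j) = (z - a j) * (1 - (starRingEnd ℂ) (a j) * z) := by
    intro j z; simp [hQdef]
  set P₁ : ℂ[X] := ∑ k, C (1 - (starRingEnd ℂ) (a k) * a k) * X *
      ∏ j ∈ Finset.univ.erase k, Q j with hP1def
  set P₂ : ℂ[X] := C (n : ℂ) * ∏ j, Q j with hP2def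
  -- nonvanishing on the circle
  have hQne : ∀ j (z : ℂ), ‖z‖ = 1 → eval z (Q j) ≠ 0 := by
    intro j z hz
    rw [hQeval]
    apply mul_ne_zero
    · intro h
      have : z = a j := by linear_combination h
      rw [this] at hz; exact absurd hz (ne_of_lt (ha j))
    · intro h
      have h1 : (starRingEnd ℂ) (a j) * z = 1 := by linear_combination -h
      have h2 : ‖(starRingEnd ℂ) (a j) * z‖ = ‖a j‖ := by
        simp [map_mul, hz]
      rw [h1] at h2; simp at h2
      exact absurd h2.symm (ne_of_lt (ha j))
  -- polynomial identity
  have heq : P₁ = P₂ := by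
    apply Polynomial.eq_of_infinite_eval_eq
    apply Set.Infinite.mono _ circle_infinite
    intro z hz
    simp only [Set.mem_setOf_eq] at hz ⊢
    have h := hkey z hz
    have h2 := congrArg (· * ∏ j, eval z (Q j)) h
    rw [Finset.sum_mul] at h2
    have h3 : ∀ k : Fin n, (1 - (starRingEnd ℂ) (a k) * a k) * z /
        ((z - a k) * (1 - (starRingEnd ℂ) (a k) * z)) * ∏ j, eval z (Q j) =
        (1 - (starRingEnd ℂ) (a k) * a k) * z * ∏ j ∈ Finset.univ.erase k, eval z (Q j) := by
      intro k
      have hne : (z - a k) * (1 - (starRingEnd ℂ) (a k) * z) ≠ 0 := by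
        rw [← hQeval]; exact hQne k z hz
      rw [← Finset.mul_prod_erase Finset.univ _ (Finset.mem_univ k), hQeval k z]
      rw [div_mul_eq_mul_div, div_eq_iff hne]
      ring
    simp only [h3] at h2
    rw [hP1def, hP2def]
    rw [Polynomial.eval_finset_sum]
    simp only [eval_mul, eval_C, eval_X, Polynomial.eval_prod]
    rw [h2]
  -- degrees and leading coefficients
  set D : Fin n → ℕ := fun j => if a j = 0 then 1 else 2 with hDdef
  set L : Fin n → ℂ := fun j => if a j = 0 then 1 else -((starRingEnd ℂ) (a j)) with hLdef
  have hQX : ∀ j, a j = 0 → Q j = X := by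
    intro j hj; simp [hQdef, hj]
  have hlin : ∀ j, a j ≠ 0 → (1 - C ((starRingEnd ℂ) (a j)) * X) =
      C (-((starRingEnd ℂ) (a j))) * X + C 1 := by
    intro j _; simp; ring
  have hconjne : ∀ j, a j ≠ 0 → -((starRingEnd ℂ) (a j)) ≠ 0 := by
    intro j hj
    simpa using hj
  have hD : ∀ j, (Q j).natDegree = D j := by
    intro j
    by_cases hj : a j = 0
    · rw [hQX j hj, hDdef]; simp [hj]
    · rw [hQdef, hDdef]
      simp only [hj, if_false]
      rw [Polynomial.natDegree_mul (X_sub_C_ne_zero _) (by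
        intro h
        have := congrArg (eval 0) h
        simp at this)]
      rw [Polynomial.natDegree_X_sub_C, hlin j hj, Polynomial.natDegree_linear (hconjne j hj)]
  have hL : ∀ j, (Q j).leadingCoeff = L j := by
    intro j
    by_cases hj : a j = 0
    · rw [hQX j hj, hLdef]; simp [hj]
    · rw [hQdef, hLdef]
      simp only [hj, if_false]
      rw [Polynomial.leadingCoeff_mul, Polynomial.leadingCoeff_X_sub_C, one_mul]
      rw [hlin j hj, Polynomial.leadingCoeff_linear (hconjne j hj)]
  have hLne : ∀ j, L j ≠ 0 := by
    intro j
    rw [hLdef]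
    by_cases hj : a j = 0 <;> simp [hj]
  set N : ℕ := ∑ j, D j with hNdef
  set Lp : ℂ := ∏ j, L j with hLpdef
  have hLpne : Lp ≠ 0 := Finset.prod_ne_zero_iff.mpr fun j _ => hLne j
  -- coefficient of X^N in P₂
  have hdegprod : (∏ j, Q j).natDegree = N := by
    rw [Polynomial.natDegree_prod _ _ fun j _ => hQ0 j]
    exact Finset.sum_congr rfl fun j _ => hD j
  have hc2 : P₂.coeff N = (n : ℂ) * Lp := by
    rw [hP2def, Polynomial.coeff_C_mul, ← hdegprod, Polynomial.coeff_natDegree,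
      Polynomial.leadingCoeff_prod]
    rw [hLpdef]
    congr 1
    exact Finset.prod_congr rfl fun j _ => hL j
  -- coefficient of X^N in P₁
  have hc1 : P₁.coeff N = ((Finset.univ.filter (fun k => a k = 0)).card : ℂ) * Lp := by
    rw [hP1def, Polynomial.finset_sum_coeff]
    have hterm : ∀ k : Fin n, (C (1 - (starRingEnd ℂ) (a k) * a k) * X *
        ∏ j ∈ Finset.univ.erase k, Q j).coeff N = if a k = 0 then Lp else 0 := by
      intro k
      have hM : D k + ∑ j ∈ Finset.univ.erase k, D j = N := by
        rw [hNdef, Finset.add_sum_erase _ _ (Finset.mem_univ k)]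
      have hMdeg : (∏ j ∈ Finset.univ.erase k, Q j).natDegree =
          ∑ j ∈ Finset.univ.erase k, D j := by
        rw [Polynomial.natDegree_prod _ _ fun j _ => hQ0 j]
        exact Finset.sum_congr rfl fun j _ => hD j
      by_cases hk : a k = 0
      · simp only [hk, if_true]
        rw [show (1 : ℂ) - (starRingEnd ℂ) (0:ℂ) * 0 = 1 by simp, map_one, one_mul]
        have hN' : N = (∑ j ∈ Finset.univ.erase k, D j) + 1 := by
          rw [← hM, hDdef]; simp [hk]; ring
        rw [hN', Polynomial.coeff_X_mul, ← hMdeg, Polynomial.coeff_natDegree,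
          Polynomial.leadingCoeff_prod]
        rw [hLpdef, ← Finset.prod_erase Finset.univ (by rw [hLdef]; simp [hk] : L k = 1)]
        exact Finset.prod_congr rfl fun j _ => hL j
      · simp only [hk, if_false]
        apply Polynomial.coeff_eq_zero_of_natDegree_lt
        calc (C (1 - (starRingEnd ℂ) (a k) * a k) * X *
              ∏ j ∈ Finset.univ.erase k, Q j).natDegree
            ≤ (C (1 - (starRingEnd ℂ) (a k) * a k) * X).natDegree +
              (∏ j ∈ Finset.univ.erase k, Q j).natDegree := Polynomial.natDegree_mul_le
          _ ≤ 1 + ∑ j ∈ Finset.univ.erase k, D j := by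
              rw [hMdeg]
              gcongr
              calc (C (1 - (starRingEnd ℂ) (a k) * a k) * X).natDegree
                  ≤ (C (1 - (starRingEnd ℂ) (a k) * a k)).natDegree + X.natDegree :=
                    Polynomial.natDegree_mul_le
                _ ≤ 1 := by rw [Polynomial.natDegree_C, Polynomial.natDegree_X]
          _ < N := by
              rw [← hM, hDdef]
              simp only [hk, if_false]
              omega

    rw [Finset.sum_congr rfl fun k _ => hterm k]
    rw [Finset.sum_ite, Finset.sum_const, Finset.sum_const_zero, add_zero, nsmul_eq_mul]
  -- conclude
  have hcard : ((Finset.univ.filter (fun k => a k = 0)).card : ℂ) = (n : ℂ) := by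
    have h' := hc1
    rw [heq, hc2] at h'
    exact mul_right_cancel₀ hLpne h'.symm
  have hcardn : (Finset.univ.filter (fun k => a k = 0)).card = n := by exact_mod_cast hcard
  have huniv : Finset.univ.filter (fun k => a k = 0) = Finset.univ := by
    apply Finset.eq_univ_of_card
    rw [hcardn]; simp
  intro k
  have hk : k ∈ Finset.univ.filter (fun k => a k = 0) := by
    rw [huniv]; exact Finset.mem_univ k
  exact (Finset.mem_filter.mp hk).2


/-- If a finite Blaschke product of degree `n` has `|B'| ≡ n` on the unit circle,
then `B(z) = α zⁿ` for some unimodular constant `α`. -/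
theorem blaschke_constant_deriv (n : ℕ) (a : Fin n → ℂ)
    (ha : ∀ k, ‖a k‖ < 1) (α : ℂ) (hα : ‖α‖ = 1)
    (B : ℂ → ℂ)
    (hB : ∀ z, B z = α * ∏ k, (z - a k) / (1 - (starRingEnd ℂ) (a k) * z))
    (hconst : ∀ z : ℂ, ‖z‖ = 1 → ‖deriv B z‖ = n) :
    ∃ β : ℂ, ‖β‖ = 1 ∧ ∀ z, B z = β * z ^ n := by
  have hall := all_zero n a ha (circle_sum n a ha α hα B hB hconst)
  refine ⟨α, hα, fun z => ?_⟩
  rw [hB z]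
  simp [hall, Finset.prod_const]
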